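/- Let X and Y be real-valued random variables on a probability space with cumulative distribution functions F_X and F_Y, and let g, h : ℝ → ℝ be strictly increasing functions. Then the cumulative distribution functions of g(X) and h(Y) satisfy F_{g(X)}(g(x)) = F_X(x) and F_{h(Y)}(h(y)) = F_Y(y) for all real x, y; consequently, for every u ∈ (0,1) with P(F_X(X) > u) > 0, E[F_{h(Y)}(h(Y)) | F_{g(X)}(g(X)) > u] = E[F_Y(Y) | F_X(X) > u], and the limit lim_{u→1⁻} E[F_{h(Y)}(h(Y)) | F_{g(X)}(g(X)) > u] exists if and only if lim_{u→1⁻} E[F_Y(Y) | F_X(X) > u] exists, in which case the two limits are equal. -/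
import Mathlib


open MeasureTheory ProbabilityTheory Filter Set
open scoped ProbabilityTheory

/-- Invariance of the causal tail coefficient under strictly increasing
marginal transformations. -/
theorem causal_tail_coefficient_invariant_under_strictMono
    {Ω : Type*} [MeasurableSpace Ω] (μ : Measure Ω) [IsProbabilityMeasure μ]
    (X Y : Ω → ℝ) (hX : Measurable X) (hY : Measurable Y)
    (g h : ℝ → ℝ) (hg : StrictMono g) (hh : StrictMono h)
    (FX FY FgX FhY : ℝ → ℝ)
    (hFX : ∀ t, FX t = (μ {ω | X ω ≤ t}).toReal)
    (hFY : ∀ t, FY t = (μ {ω | Y ω ≤ t}).toReal)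
    (hFgX : ∀ t, FgX t = (μ {ω | g (X ω) ≤ t}).toReal)
    (hFhY : ∀ t, FhY t = (μ {ω | h (Y ω) ≤ t}).toReal) :
    (∀ x : ℝ, FgX (g x) = FX x) ∧
    (∀ y : ℝ, FhY (h y) = FY y) ∧
    (∀ u ∈ Set.Ioo (0 : ℝ) 1, 0 < μ {ω | u < FX (X ω)} →
      ∫ ω, FhY (h (Y ω)) ∂(μ[|{ω | u < FgX (g (X ω))}]) =
        ∫ ω, FY (Y ω) ∂(μ[|{ω | u < FX (X ω)}])) ∧
    (∀ L : ℝ,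
      Tendsto (fun u : ℝ => ∫ ω, FhY (h (Y ω)) ∂(μ[|{ω | u < FgX (g (X ω))}]))
          (nhdsWithin 1 (Set.Iio 1)) (nhds L) ↔
        Tendsto (fun u : ℝ => ∫ ω, FY (Y ω) ∂(μ[|{ω | u < FX (X ω)}]))
          (nhdsWithin 1 (Set.Iio 1)) (nhds L)) := by
  have hgx : ∀ x : ℝ, FgX (g x) = FX x := by
    intro x
    rw [hFgX, hFX]
    have : {ω | g (X ω) ≤ g x} = {ω | X ω ≤ x} := by
      ext ω; simp [hg.le_iff_le]
    rw [this]
  have hhy : ∀ y : ℝ, FhY (h y) = FY y := by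
    intro y
    rw [hFhY, hFY]
    have : {ω | h (Y ω) ≤ h y} = {ω | Y ω ≤ y} := by
      ext ω; simp [hh.le_iff_le]
    rw [this]
  have hint : ∀ u : ℝ,
      ∫ ω, FhY (h (Y ω)) ∂(μ[|{ω | u < FgX (g (X ω))}]) =
        ∫ ω, FY (Y ω) ∂(μ[|{ω | u < FX (X ω)}]) := by
    intro u
    have hset : {ω | u < FgX (g (X ω))} = {ω | u < FX (X ω)} := by
      ext ω; simp [hgx]
    rw [hset]
    exact integral_congr_ae (Filter.Eventually.of_forall fun ω => hhy (Y ω))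
  refine ⟨hgx, hhy, fun u _ _ => hint u, fun L => ?_⟩
  constructor <;> intro ht <;> [skip; skip] <;>
    simpa [hint] using ht
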